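/- Let Y be a finite nonempty type, r : Y → ℝ, and α > 0. Let D : Y × Y → ℝ satisfy D(y₁, y₂) > 0 for all y₁, y₂ and the Bradley–Terry consistency condition D(y₁, y₂) * exp(r(y₂)) = D(y₂, y₁) * exp(r(y₁)) for all y₁, y₂. Define the preference loss L(π) = −(1/α) * ∑_{(y₁, y₂) ∈ Y × Y} D(y₁, y₂) * log( π(y₁)^α / (π(y₁)^α + π(y₂)^α) ), and let ρ(y) = exp(r(y)/α) / ∑_{y'} exp(r(y')/α). Then for every π : Y → ℝ with π(y) > 0 for all y, ∑_{y} π(y) = 1, and π ≠ ρ, it holds that L(π) > L(ρ). -/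

import Mathlib

open Finset

lemma half_sum_aux {Y : Type*} [Fintype Y] (S : Y × Y → ℝ)
    (hS : ∀ y₁ y₂ : Y, S (y₁, y₂) = S (y₂, y₁)) (f : Y → ℝ) (hf : ∀ y, 0 < f y) :
    ∑ yy : Y × Y, S yy * (f yy.1 / (f yy.1 + f yy.2)) = (1 / 2) * ∑ yy : Y × Y, S yy := by
  have hswap : ∑ yy : Y × Y, S yy * (f yy.1 / (f yy.1 + f yy.2))
      = ∑ yy : Y × Y, S yy * (f yy.2 / (f yy.1 + f yy.2)) := by
    apply Fintype.sum_equiv (Equiv.prodComm Y Y)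
    rintro ⟨y₁, y₂⟩
    simp only [Equiv.prodComm_apply, Prod.swap]
    rw [hS y₁ y₂, add_comm (f y₂)]
  have hsum : (∑ yy : Y × Y, S yy * (f yy.1 / (f yy.1 + f yy.2)))
      + (∑ yy : Y × Y, S yy * (f yy.2 / (f yy.1 + f yy.2))) = ∑ yy : Y × Y, S yy := by
    rw [← Finset.sum_add_distrib]
    refine Finset.sum_congr rfl fun yy _ => ?_
    have h1 := hf yy.1
    have h2 := hf yy.2
    have h : f yy.1 + f yy.2 ≠ 0 := by positivity
    field_simp
  linarith [hswap, hsum]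


/-- Unique-minimizer claim of SPO's Theorem 1 (tabular model, single context):
under Bradley–Terry consistency of `D` with rewards `r`, the preference loss
`L π = -(1/α) * ∑ (y₁,y₂), D (y₁,y₂) * log (π y₁ ^ α / (π y₁ ^ α + π y₂ ^ α))`
is strictly larger at any point `π` of the relative interior of the probability
simplex other than `ρ = softmax (r/α)`. -/
theorem spo_unique_minimizer (Y : Type*) [Fintype Y] [Nonempty Y]
    (r : Y → ℝ) (α : ℝ) (hα : 0 < α)
    (D : Y × Y → ℝ) (hD : ∀ y₁ y₂, 0 < D (y₁, y₂))
    (hBT : ∀ y₁ y₂, D (y₁, y₂) * Real.exp (r y₂) = D (y₂, y₁) * Real.exp (r y₁))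
    (L : (Y → ℝ) → ℝ)
    (hL : ∀ p : Y → ℝ, L p = -(1 / α) *
      ∑ yy : Y × Y, D yy * Real.log ((p yy.1) ^ α / ((p yy.1) ^ α + (p yy.2) ^ α)))
    (ρ : Y → ℝ) (hρ : ∀ y, ρ y = Real.exp (r y / α) / ∑ y', Real.exp (r y' / α))
    (π : Y → ℝ) (hπ : ∀ y, 0 < π y) (hsum : ∑ y, π y = 1) (hne : π ≠ ρ) :
    L ρ < L π := by
  set Z : ℝ := ∑ y', Real.exp (r y' / α) with hZdef
  have hZ : 0 < Z := Finset.sum_pos (fun y _ => Real.exp_pos _) Finset.univ_nonempty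
  have hρpos : ∀ y, 0 < ρ y := fun y => by rw [hρ]; positivity
  have hρsum : ∑ y, ρ y = 1 := by
    rw [Finset.sum_congr rfl fun y _ => hρ y, ← Finset.sum_div]
    exact div_self (ne_of_gt hZ)
  -- rpow of ρ
  have hρpow : ∀ y, (ρ y) ^ α = Real.exp (r y) / Z ^ α := by
    intro y
    rw [hρ y, Real.div_rpow (le_of_lt (Real.exp_pos _)) (le_of_lt hZ),
      ← Real.exp_log (Real.exp_pos (r y / α))]
    rw [Real.log_exp, ← Real.exp_mul, div_mul_cancel₀ _ (ne_of_gt hα)]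
  set E : Y → ℝ := fun y => Real.exp (r y) with hE
  have hEpos : ∀ y, 0 < E y := fun y => Real.exp_pos _
  set a : Y → ℝ := fun y => (π y) ^ α with ha
  have hapos : ∀ y, 0 < a y := fun y => Real.rpow_pos_of_pos (hπ y) α
  set A : Y × Y → ℝ := fun yy => a yy.1 / (a yy.1 + a yy.2) with hA
  set B : Y × Y → ℝ := fun yy => E yy.1 / (E yy.1 + E yy.2) with hB
  have hApos : ∀ yy, 0 < A yy := fun yy => by
    have := hapos yy.1; have := hapos yy.2; simp only [hA]; positivity
  have hBpos : ∀ yy, 0 < B yy := fun yy => by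
    have := hEpos yy.1; have := hEpos yy.2; simp only [hB]; positivity
  -- ρ-sigmoid equals E-sigmoid
  have hρsig : ∀ yy : Y × Y, (ρ yy.1) ^ α / ((ρ yy.1) ^ α + (ρ yy.2) ^ α) = B yy := by
    intro yy
    rw [hρpow, hρpow]
    have hZα : (Z : ℝ) ^ α ≠ 0 := (Real.rpow_pos_of_pos hZ α).ne'
    have hden : Real.exp (r yy.1) + Real.exp (r yy.2) ≠ 0 := by positivity
    simp only [hB, hE]
    field_simp
  -- the symmetric weight
  set S : Y × Y → ℝ := fun yy => D yy * ((E yy.1 + E yy.2) / E yy.1) with hS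
  have hSsymm : ∀ y₁ y₂ : Y, S (y₁, y₂) = S (y₂, y₁) := by
    intro y₁ y₂
    have h := hBT y₁ y₂
    have h1 := (hEpos y₁).ne'
    have h2 := (hEpos y₂).ne'
    simp only [hS, hE]
    field_simp
    linear_combination (Real.exp (r y₁) + Real.exp (r y₂)) * h
  have hSpos : ∀ yy : Y × Y, 0 < S yy := fun yy => by
    have := hEpos yy.1; have := hEpos yy.2; have := hD yy.1 yy.2
    simp only [hS]
    have : 0 < D yy := hD yy.1 yy.2
    positivity
  -- D = S * B
  have hDSB : ∀ yy : Y × Y, D yy = S yy * B yy := by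
    intro yy
    simp only [hS, hB]
    have h1 := (hEpos yy.1).ne'
    have h2 : E yy.1 + E yy.2 ≠ 0 := by have := hEpos yy.1; have := hEpos yy.2; positivity
    field_simp
  -- sums
  have hsumSA : ∑ yy : Y × Y, S yy * A yy = (1/2) * ∑ yy : Y × Y, S yy :=
    half_sum_aux S hSsymm a hapos
  have hsumSB : ∑ yy : Y × Y, S yy * B yy = (1/2) * ∑ yy : Y × Y, S yy :=
    half_sum_aux S hSsymm E hEpos
  have hsumD : ∑ yy : Y × Y, D yy = (1/2) * ∑ yy : Y × Y, S yy := by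
    rw [Finset.sum_congr rfl fun yy _ => hDSB yy]; exact hsumSB
  -- D * (A/B) = S * A
  have hDAB : ∀ yy : Y × Y, D yy * (A yy / B yy) = S yy * A yy := by
    intro yy
    rw [hDSB yy]
    have hB0 := (hBpos yy).ne'
    field_simp
  -- key witness: some pair with A ≠ B
  have hwit : ∃ yy : Y × Y, A yy ≠ B yy := by
    by_contra hcon
    push_neg at hcon
    apply hne
    -- first: π y₁ * ρ y₂ = ρ y₁ * π y₂ for all
    have hratio : ∀ y₁ y₂ : Y, π y₁ * ρ y₂ = ρ y₁ * π y₂ := by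
      intro y₁ y₂
      have h := hcon (y₁, y₂)
      rw [← hρsig (y₁, y₂)] at h
      simp only [hA] at h
      have hb1 : (0:ℝ) < (ρ y₁) ^ α := Real.rpow_pos_of_pos (hρpos y₁) α
      have hb2 : (0:ℝ) < (ρ y₂) ^ α := Real.rpow_pos_of_pos (hρpos y₂) α
      have ha1 := hapos y₁
      have ha2 := hapos y₂
      have hden1 : a y₁ + a y₂ ≠ 0 := by positivity
      have hden2 : (ρ y₁) ^ α + (ρ y₂) ^ α ≠ 0 := by positivity
      rw [div_eq_div_iff hden1 hden2] at h
      have hkey : a y₁ * (ρ y₂) ^ α = (ρ y₁) ^ α * a y₂ := by nlinarith [h]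
      have hmul : (π y₁ * ρ y₂) ^ α = (ρ y₁ * π y₂) ^ α := by
        rw [Real.mul_rpow (hπ y₁).le (hρpos y₂).le, Real.mul_rpow (hρpos y₁).le (hπ y₂).le]
        exact hkey
      have hπ1 := hπ y₁
      have hπ2 := hπ y₂
      have hρ1 := hρpos y₁
      have hρ2 := hρpos y₂
      have hp1 : (0:ℝ) ≤ π y₁ * ρ y₂ := by positivity
      have hp2 : (0:ℝ) ≤ ρ y₁ * π y₂ := by positivity
      have := congrArg (fun x : ℝ => x ^ α⁻¹) hmul
      simpa [Real.rpow_rpow_inv hp1 (ne_of_gt hα), Real.rpow_rpow_inv hp2 (ne_of_gt hα)]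
        using this
    funext y
    have : ∑ y', π y' * ρ y = ∑ y', ρ y' * π y :=
      Finset.sum_congr rfl fun y' _ => hratio y' y
    rw [← Finset.sum_mul, ← Finset.sum_mul, hsum, hρsum, one_mul, one_mul] at this
    exact this.symm
  -- main inequality: ∑ D log A < ∑ D log B
  have hlt : ∑ yy : Y × Y, D yy * Real.log (A yy)
      < ∑ yy : Y × Y, D yy * Real.log (B yy) := by
    have hkey : ∑ yy : Y × Y, (D yy * Real.log (A yy) - D yy * Real.log (B yy))
        < ∑ yy : Y × Y, (D yy * (A yy / B yy) - D yy) := by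
      apply Finset.sum_lt_sum
      · intro yy _
        have hx : 0 < A yy / B yy := div_pos (hApos yy) (hBpos yy)
        have hlog : Real.log (A yy / B yy) ≤ A yy / B yy - 1 :=
          Real.log_le_sub_one_of_pos hx
        calc D yy * Real.log (A yy) - D yy * Real.log (B yy)
            = D yy * Real.log (A yy / B yy) := by
              rw [Real.log_div (hApos yy).ne' (hBpos yy).ne']; ring
          _ ≤ D yy * (A yy / B yy - 1) :=
              mul_le_mul_of_nonneg_left hlog (hD yy.1 yy.2).le
          _ = D yy * (A yy / B yy) - D yy := by ring
      · obtain ⟨yy, hyy⟩ := hwit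
        refine ⟨yy, Finset.mem_univ yy, ?_⟩
        have hx : 0 < A yy / B yy := div_pos (hApos yy) (hBpos yy)
        have hB0 := (hBpos yy).ne'
        have hne1 : A yy / B yy ≠ 1 := fun h => hyy (by
          field_simp at h; exact h)
        have hlog : Real.log (A yy / B yy) < A yy / B yy - 1 :=
          Real.log_lt_sub_one_of_pos hx hne1
        calc D yy * Real.log (A yy) - D yy * Real.log (B yy)
            = D yy * Real.log (A yy / B yy) := by
              rw [Real.log_div (hApos yy).ne' (hBpos yy).ne']; ring
          _ < D yy * (A yy / B yy - 1) :=
              mul_lt_mul_of_pos_left hlog (hD yy.1 yy.2)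
          _ = D yy * (A yy / B yy) - D yy := by ring
    have hzero : ∑ yy : Y × Y, (D yy * (A yy / B yy) - D yy) = 0 := by
      rw [Finset.sum_sub_distrib, Finset.sum_congr rfl fun yy _ => hDAB yy,
        hsumSA, hsumD, sub_self]
    rw [Finset.sum_sub_distrib] at hkey
    linarith [hkey, hzero]
  -- conclude
  rw [hL, hL]
  have hρrw : ∑ yy : Y × Y, D yy * Real.log ((ρ yy.1) ^ α / ((ρ yy.1) ^ α + (ρ yy.2) ^ α))
      = ∑ yy : Y × Y, D yy * Real.log (B yy) :=
    Finset.sum_congr rfl fun yy _ => by rw [hρsig yy]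
  rw [hρrw]
  exact mul_lt_mul_of_neg_left hlt (neg_lt_zero.mpr (by positivity))
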